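/- arXiv:math-ph/0203020 — 4 statements merged into one kernel-verified Lean document; each statement's English description precedes it below -/
import Mathlib

section
/- With the hypotheses of the Sakhnovich system (A₁ skew-Hermitian, D positive diagonal), for any λ with Im λ > 0, the function r ↦ P₂(r,λ)*P₂(r,λ) − P₁(r,λ)*P₁(r,λ) equals 2·Im(λ)·∫₀^r P₁(s,λ)* D P₁(s,λ) ds, and in particular it is positive semidefinite and nondecreasing in r (in the Loewner order). -/
open Complex MeasureTheory Matrix
open scoped ComplexOrder

attribute [local instance] Matrix.frobeniusSeminormedAddCommGroup
  Matrix.frobeniusNormedAddCommGroup Matrix.frobeniusNormedSpace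
  Matrix.frobeniusNormedRing Matrix.frobeniusNormedAlgebra

noncomputable instance frobENormedAddMonoid {m : ℕ} : ENormedAddMonoid (Matrix (Fin m) (Fin m) ℂ) :=
  NormedAddCommGroup.toENormedAddCommMonoid.toENormedAddMonoid

noncomputable def ctCLM (m : ℕ) : Matrix (Fin m) (Fin m) ℂ →L[ℝ] Matrix (Fin m) (Fin m) ℂ :=
  LinearMap.toContinuousLinearMap
    { toFun := conjTranspose
      map_add' := fun A B => conjTranspose_add A B
      map_smul' := fun c A => by
        ext i j
        simp [conjTranspose_apply, Matrix.smul_apply] }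

@[simp] lemma ctCLM_apply {m : ℕ} (A : Matrix (Fin m) (Fin m) ℂ) : ctCLM m A = Aᴴ := rfl

noncomputable def quadCLM {m : ℕ} (x : Fin m → ℂ) : Matrix (Fin m) (Fin m) ℂ →L[ℝ] ℂ :=
  LinearMap.toContinuousLinearMap
    { toFun := fun M => star x ⬝ᵥ (M *ᵥ x)
      map_add' := fun A B => by simp [Matrix.add_mulVec, dotProduct_add]
      map_smul' := fun c A => by
        simp only [RingHom.id_apply, dotProduct, mulVec, Matrix.smul_apply, smul_eq_mul,
          Finset.mul_sum, Complex.real_smul]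
        refine Finset.sum_congr rfl fun i _ => Finset.sum_congr rfl fun j _ => ?_
        ring }

@[simp] lemma quadCLM_apply {m : ℕ} (x : Fin m → ℂ) (A : Matrix (Fin m) (Fin m) ℂ) :
    quadCLM x A = star x ⬝ᵥ (A *ᵥ x) := rfl

lemma posSemidef_intervalIntegral {m : ℕ} {f : ℝ → Matrix (Fin m) (Fin m) ℂ}
    (hf : Continuous f) (hpos : ∀ s, (f s).PosSemidef) {a b : ℝ} (hab : a ≤ b) :
    (∫ s in a..b, f s).PosSemidef := by
  have hint : IntervalIntegrable f volume a b := hf.intervalIntegrable a b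
  refine Matrix.PosSemidef.of_dotProduct_mulVec_nonneg ?_ ?_
  · show (∫ s in a..b, f s)ᴴ = _
    have h : ∫ s in a..b, ctCLM m (f s) = ctCLM m (∫ s in a..b, f s) :=
      (ctCLM m).intervalIntegral_comp_comm hint
    rw [show (∫ s in a..b, f s)ᴴ = ctCLM m (∫ s in a..b, f s) from rfl, ← h]
    simp only [ctCLM_apply]
    congr 1
    funext s
    exact (hpos s).1
  · intro x
    have h : ∫ s in a..b, quadCLM x (f s) = quadCLM x (∫ s in a..b, f s) :=
      (quadCLM x).intervalIntegral_comp_comm hint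
    rw [show star x ⬝ᵥ ((∫ s in a..b, f s) *ᵥ x) = quadCLM x (∫ s in a..b, f s) from rfl, ← h]
    have hg : Continuous fun s => quadCLM x (f s) := (quadCLM x).continuous.comp hf
    have hgint : IntervalIntegrable (fun s => quadCLM x (f s)) volume a b :=
      hg.intervalIntegrable a b
    rw [Complex.le_def]
    constructor
    · have hre := Complex.reCLM.intervalIntegral_comp_comm hgint
      simp only [Complex.reCLM_apply] at hre
      rw [Complex.zero_re, ← hre]
      apply intervalIntegral.integral_nonneg hab
      intro u _
      exact (Complex.le_def.mp ((hpos u).dotProduct_mulVec_nonneg x)).1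
    · have him := Complex.imCLM.intervalIntegral_comp_comm hgint
      simp only [Complex.imCLM_apply] at him
      rw [Complex.zero_im, ← him]
      have h2 : ∀ u, (star x ⬝ᵥ (f u *ᵥ x)).im = 0 := fun u =>
        ((Complex.le_def.mp ((hpos u).dotProduct_mulVec_nonneg x)).2).symm
      simp [h2]

lemma posSemidef_real_smul {m : ℕ} {c : ℝ} (hc : 0 ≤ c) {M : Matrix (Fin m) (Fin m) ℂ}
    (hM : M.PosSemidef) : ((c : ℂ) • M).PosSemidef := by
  refine Matrix.PosSemidef.of_dotProduct_mulVec_nonneg ?_ ?_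
  · show ((c:ℂ) • M)ᴴ = _
    rw [conjTranspose_smul, hM.1]
    congr 1
    simp [Complex.star_def, Complex.conj_ofReal]
  · intro x
    have h : star x ⬝ᵥ (((c:ℂ) • M) *ᵥ x) = (c:ℂ) * (star x ⬝ᵥ (M *ᵥ x)) := by
      rw [Matrix.smul_mulVec, dotProduct_smul, smul_eq_mul]
    rw [h]
    have h0 := hM.dotProduct_mulVec_nonneg x
    rw [Complex.le_def] at h0 ⊢
    constructor
    · simp only [Complex.zero_re, Complex.mul_re, Complex.ofReal_re, Complex.ofReal_im,
        zero_mul, sub_zero]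
      exact mul_nonneg hc (by simpa using h0.1)
    · simp only [Complex.zero_im, Complex.mul_im, Complex.ofReal_re, Complex.ofReal_im,
        zero_mul, add_zero]
      rw [← h0.2]
      simp

/-- For the Sakhnovich system with `Im λ > 0`, the matrix
`P₂ᴴP₂ - P₁ᴴP₁` equals `2 Im λ ∫₀^r P₁ᴴ D P₁`, is positive semidefinite and
is nondecreasing in `r` in the Loewner order. -/
theorem sakhnovich_monotone_posSemidef
    (m : ℕ)
    (A₁ A₂ : ℝ → Matrix (Fin m) (Fin m) ℂ)
    (d : Fin m → ℝ) (hd : ∀ i, 0 < d i)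
    (D : Matrix (Fin m) (Fin m) ℂ)
    (hD : D = Matrix.diagonal fun i => (d i : ℂ))
    (hA₁c : Continuous A₁) (hA₂c : Continuous A₂)
    (hA₁skew : ∀ r, (A₁ r)ᴴ = -(A₁ r))
    (l : ℂ) (hl : 0 < l.im)
    (P₁ P₂ : ℝ → Matrix (Fin m) (Fin m) ℂ)
    (hP₁ : ∀ r, HasDerivAt P₁
      ((Complex.I * l) • (D * P₁ r) + A₁ r * P₁ r + (A₂ r)ᴴ * P₂ r) r)
    (hP₂ : ∀ r, HasDerivAt P₂ (A₂ r * P₁ r) r)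
    (hP₁0 : P₁ 0 = 1) (hP₂0 : P₂ 0 = 1) :
    (∀ r : ℝ, 0 ≤ r →
      (P₂ r)ᴴ * P₂ r - (P₁ r)ᴴ * P₁ r =
        ((2 * l.im : ℝ) : ℂ) • ∫ s in (0:ℝ)..r, (P₁ s)ᴴ * D * P₁ s) ∧
    (∀ r : ℝ, 0 ≤ r → ((P₂ r)ᴴ * P₂ r - (P₁ r)ᴴ * P₁ r).PosSemidef) ∧
    (∀ t r : ℝ, 0 ≤ t → t ≤ r →
      (((P₂ r)ᴴ * P₂ r - (P₁ r)ᴴ * P₁ r) -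
        ((P₂ t)ᴴ * P₂ t - (P₁ t)ᴴ * P₁ t)).PosSemidef) := by
  have hDH : Dᴴ = D := by
    subst hD
    ext i j
    rw [Matrix.conjTranspose_apply]
    rcases eq_or_ne i j with h | h
    · subst h; simp [Matrix.diagonal_apply_eq, Complex.conj_ofReal]
    · rw [Matrix.diagonal_apply_ne' _ h, Matrix.diagonal_apply_ne _ h, star_zero]
  -- continuity of P₁, P₂
  have hP₁cont : Continuous P₁ :=
    continuous_iff_continuousAt.mpr fun r => (hP₁ r).continuousAt
  have hP₂cont : Continuous P₂ :=
    continuous_iff_continuousAt.mpr fun r => (hP₂ r).continuousAt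
  set g : ℝ → Matrix (Fin m) (Fin m) ℂ := fun s => (P₁ s)ᴴ * D * P₁ s with hg_def
  have hgcont : Continuous g := by
    apply Continuous.mul
    apply Continuous.mul
    · exact ((ctCLM m).continuous).comp hP₁cont
    · exact continuous_const
    · exact hP₁cont
  have hgpos : ∀ s, (g s).PosSemidef := by
    intro s
    have hDpos : D.PosSemidef := by
      rw [hD]
      exact Matrix.PosSemidef.diagonal fun i => by
        rw [Complex.le_def]; simp [(hd i).le]
    exact hDpos.conjTranspose_mul_mul_same (P₁ s)
  -- derivative of F
  set c : ℂ := ((2 * l.im : ℝ) : ℂ) with hc_def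
  have key : ∀ r, (A₂ r * P₁ r)ᴴ * P₂ r + (P₂ r)ᴴ * (A₂ r * P₁ r)
      - (((Complex.I * l) • (D * P₁ r) + A₁ r * P₁ r + (A₂ r)ᴴ * P₂ r)ᴴ * P₁ r
        + (P₁ r)ᴴ * ((Complex.I * l) • (D * P₁ r) + A₁ r * P₁ r + (A₂ r)ᴴ * P₂ r))
      = c • g r := by
    intro r
    have hs : star (Complex.I * l) = -(Complex.I * l) - c := by
      rw [hc_def]
      apply Complex.ext <;> simp <;> ring
    simp only [conjTranspose_mul, conjTranspose_add, conjTranspose_smul, hDH, hA₁skew,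
      conjTranspose_conjTranspose, hs, hg_def]
    simp only [add_mul, mul_add, Matrix.neg_mul, Matrix.mul_neg, smul_mul_assoc,
      Matrix.mul_smul, add_smul, neg_smul, sub_smul, Matrix.mul_assoc]
    simp only [sub_mul, Matrix.neg_mul, smul_mul_assoc, Matrix.mul_assoc]
    module
  have hF' : ∀ r, HasDerivAt (fun r => (P₂ r)ᴴ * P₂ r - (P₁ r)ᴴ * P₁ r) (c • g r) r := by
    intro r
    have hP₂ct : HasDerivAt (fun r => (P₂ r)ᴴ) ((A₂ r * P₁ r)ᴴ) r := by
      have := ((ctCLM m).hasFDerivAt (x := P₂ r)).comp_hasDerivAt r (hP₂ r)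
      exact this
    have hP₁ct : HasDerivAt (fun r => (P₁ r)ᴴ)
        (((Complex.I * l) • (D * P₁ r) + A₁ r * P₁ r + (A₂ r)ᴴ * P₂ r)ᴴ) r := by
      have := ((ctCLM m).hasFDerivAt (x := P₁ r)).comp_hasDerivAt r (hP₁ r)
      exact this
    have h := (hP₂ct.mul (hP₂ r)).sub (hP₁ct.mul (hP₁ r))
    rw [← key r]
    exact h
  have hc0 : (0:ℝ) ≤ 2 * l.im := by positivity
  have hgI : ∀ a b : ℝ, IntervalIntegrable g volume a b := fun a b =>
    hgcont.intervalIntegrable a b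
  have hid : ∀ r : ℝ, (P₂ r)ᴴ * P₂ r - (P₁ r)ᴴ * P₁ r = c • ∫ s in (0:ℝ)..r, g s := by
    intro r
    have hFTC := intervalIntegral.integral_eq_sub_of_hasDerivAt
      (f := fun r => (P₂ r)ᴴ * P₂ r - (P₁ r)ᴴ * P₁ r) (a := 0) (b := r)
      (fun s _ => hF' s)
      ((hgcont.const_smul c).intervalIntegrable 0 r)
    have h0 : (P₂ 0)ᴴ * P₂ 0 - (P₁ 0)ᴴ * P₁ 0 = 0 := by
      simp [hP₁0, hP₂0]
    rw [h0, sub_zero] at hFTC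
    rw [← hFTC, intervalIntegral.integral_smul]
  refine ⟨fun r _ => hid r, fun r hr => ?_, fun t r ht htr => ?_⟩
  · rw [hid r]
    exact posSemidef_real_smul hc0 (posSemidef_intervalIntegral hgcont hgpos hr)
  · rw [hid r, hid t]
    have hadj : (∫ s in (0:ℝ)..t, g s) + (∫ s in t..r, g s) = ∫ s in (0:ℝ)..r, g s :=
      intervalIntegral.integral_add_adjacent_intervals (hgI 0 t) (hgI t r)
    rw [← hadj, smul_add, add_sub_cancel_left]
    exact posSemidef_real_smul hc0 (posSemidef_intervalIntegral hgcont hgpos htr)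
end

section
/- Generalized Gronwall lemma: if α : [0,T] → ℝ is nonnegative and integrable, c ≥ 0, β : [0,T] → ℝ is nonnegative and integrable, and α(r) ≤ c∫₀^r α(s) ds + β(r) for all r ∈ [0,T], then α(r) ≤ c∫₀^r e^{c(r−s)} β(s) ds + β(r) for all r ∈ [0,T]. -/
open MeasureTheory


lemma exp_int_aux (c r s : ℝ) :
    ∫ t in s..r, c * Real.exp (c * (r - t)) = Real.exp (c * (r - s)) - 1 := by
  have h : ∀ t ∈ Set.uIcc s r, HasDerivAt (fun t => -Real.exp (c * (r - t)))
      (c * Real.exp (c * (r - t))) t := by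
    intro t _
    have hu : HasDerivAt (fun t : ℝ => c * (r - t)) (-c) t := by
      simpa using ((hasDerivAt_id t).const_sub r).const_mul c
    have h2 := (Real.hasDerivAt_exp (c * (r - t))).comp t hu
    have h3 : HasDerivAt (fun t => -Real.exp (c * (r - t))) (-(Real.exp (c * (r - t)) * -c)) t :=
      h2.neg
    convert h3 using 1
    ring
  have hint : IntervalIntegrable (fun t => c * Real.exp (c * (r - t))) volume s r := by
    apply Continuous.intervalIntegrable
    fun_prop
  rw [intervalIntegral.integral_eq_sub_of_hasDerivAt h hint]
  simp
  ring

lemma fubini_aux (c r : ℝ) (hc : 0 ≤ c) (hr : 0 ≤ r) {α : ℝ → ℝ}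
    (hα : IntegrableOn α (Set.Icc 0 r)) :
    ∫ s in (0:ℝ)..r, (Real.exp (c * (r - s)) - 1) * α s
      = ∫ t in (0:ℝ)..r, (c * Real.exp (c * (r - t))) * (∫ s in (0:ℝ)..t, α s) := by
  set S : Set ℝ := Set.Ioc 0 r with hS
  have hSm : MeasurableSet S := measurableSet_Ioc
  have hαS : Integrable α (volume.restrict S) := hα.mono_set Set.Ioc_subset_Icc_self
  set f : ℝ → ℝ → ℝ := fun s t => if s ≤ t then (c * Real.exp (c * (r - t))) * α s else 0
    with hf
  have hcont : Continuous fun p : ℝ × ℝ => c * Real.exp (c * (r - p.2)) := by fun_prop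
  have hα_fst : AEStronglyMeasurable (fun p : ℝ × ℝ => α p.1)
      ((volume.restrict S).prod (volume.restrict S)) :=
    hαS.1.comp_quasiMeasurePreserving Measure.quasiMeasurePreserving_fst
  have hmeasE : MeasurableSet {p : ℝ × ℝ | p.1 ≤ p.2} :=
    measurableSet_le measurable_fst measurable_snd
  have hFm : AEStronglyMeasurable (Function.uncurry f)
      ((volume.restrict S).prod (volume.restrict S)) := by
    have heq : Function.uncurry f = Set.indicator {p : ℝ × ℝ | p.1 ≤ p.2}
        (fun p => (c * Real.exp (c * (r - p.2))) * α p.1) := by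
      funext p
      by_cases h : p.1 ≤ p.2 <;>
        simp [Function.uncurry, hf, Set.indicator, h]
    rw [heq]
    exact (hcont.aestronglyMeasurable.mul hα_fst).indicator hmeasE
  have hFint : Integrable (Function.uncurry f)
      ((volume.restrict S).prod (volume.restrict S)) := by
    refine Integrable.mono' ((hαS.abs).mul_prod (integrable_const (c * Real.exp (c * r)))) hFm ?_
    rw [Measure.prod_restrict]
    refine (ae_restrict_mem (hSm.prod hSm)).mono ?_
    rintro ⟨s, t⟩ ⟨hsS, htS⟩
    simp only [Function.uncurry]
    by_cases h : s ≤ t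
    · simp only [hf, if_pos h, Real.norm_eq_abs, abs_mul]
      have h1 : |c| = c := abs_of_nonneg hc
      have h2 : |Real.exp (c * (r - t))| = Real.exp (c * (r - t)) :=
        abs_of_nonneg (Real.exp_pos _).le
      have h3 : Real.exp (c * (r - t)) ≤ Real.exp (c * r) := by
        apply Real.exp_le_exp.2
        have ht0 : 0 < t := htS.1
        nlinarith
      rw [h1, h2, mul_comm]
      exact mul_le_mul_of_nonneg_left (mul_le_mul_of_nonneg_left h3 hc) (abs_nonneg _)
    · simp only [hf, if_neg h, norm_zero]
      positivity
  have inner₁ : ∀ s ∈ S, (∫ t in S, f s t) = (Real.exp (c * (r - s)) - 1) * α s := by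
    intro s hs
    have heq : (fun t => f s t) = Set.indicator (Set.Ici s)
        (fun t => (c * Real.exp (c * (r - t))) * α s) := by
      funext t
      by_cases h : s ≤ t <;> simp [hf, Set.indicator, h]
    rw [heq, setIntegral_indicator measurableSet_Ici]
    have hset : S ∩ Set.Ici s = Set.Icc s r := by
      ext x
      constructor
      · rintro ⟨⟨_, h2⟩, h3⟩; exact ⟨h3, h2⟩
      · rintro ⟨h1, h2⟩; exact ⟨⟨lt_of_lt_of_le hs.1 h1, h2⟩, h1⟩
    rw [hset, integral_Icc_eq_integral_Ioc, ← intervalIntegral.integral_of_le hs.2,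
      intervalIntegral.integral_mul_const, exp_int_aux]
  have inner₂ : ∀ t ∈ S, (∫ s in S, f s t)
      = (c * Real.exp (c * (r - t))) * (∫ s in (0:ℝ)..t, α s) := by
    intro t ht
    have heq : (fun s => f s t) = Set.indicator (Set.Iic t)
        (fun s => (c * Real.exp (c * (r - t))) * α s) := by
      funext s
      by_cases h : s ≤ t <;> simp [hf, Set.indicator, h]
    rw [heq, setIntegral_indicator measurableSet_Iic]
    have hset : S ∩ Set.Iic t = Set.Ioc 0 t := by
      ext x
      constructor
      · rintro ⟨⟨h1, _⟩, h3⟩; exact ⟨h1, h3⟩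
      · rintro ⟨h1, h2⟩; exact ⟨⟨h1, h2.trans ht.2⟩, h2⟩
    rw [hset, ← intervalIntegral.integral_of_le ht.1.le, intervalIntegral.integral_const_mul]
  calc ∫ s in (0:ℝ)..r, (Real.exp (c * (r - s)) - 1) * α s
      = ∫ s in S, (Real.exp (c * (r - s)) - 1) * α s :=
        intervalIntegral.integral_of_le hr
    _ = ∫ s in S, ∫ t in S, f s t :=
        setIntegral_congr_fun hSm fun s hs => (inner₁ s hs).symm
    _ = ∫ t in S, ∫ s in S, f s t := integral_integral_swap hFint
    _ = ∫ t in S, (c * Real.exp (c * (r - t))) * (∫ s in (0:ℝ)..t, α s) :=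
        setIntegral_congr_fun hSm fun t ht => inner₂ t ht
    _ = ∫ t in (0:ℝ)..r, (c * Real.exp (c * (r - t))) * (∫ s in (0:ℝ)..t, α s) :=
        (intervalIntegral.integral_of_le hr).symm

/-- Generalized Gronwall lemma. -/
theorem gronwall_lemma_general
    (T c : ℝ) (α β : ℝ → ℝ)
    (hT : 0 ≤ T)
    (hc : 0 ≤ c)
    (hα_int : IntegrableOn α (Set.Icc 0 T))
    (hβ_int : IntegrableOn β (Set.Icc 0 T))
    (hα_nonneg : ∀ r ∈ Set.Icc (0:ℝ) T, 0 ≤ α r)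
    (hβ_nonneg : ∀ r ∈ Set.Icc (0:ℝ) T, 0 ≤ β r)
    (hα : ∀ r ∈ Set.Icc (0:ℝ) T, α r ≤ c * (∫ s in (0:ℝ)..r, α s) + β r) :
    ∀ r ∈ Set.Icc (0:ℝ) T,
      α r ≤ c * (∫ s in (0:ℝ)..r, Real.exp (c * (r - s)) * β s) + β r := by
  intro r hr
  obtain ⟨hr0, hrT⟩ := hr
  have hsub : Set.Icc (0:ℝ) r ⊆ Set.Icc 0 T := Set.Icc_subset_Icc le_rfl hrT
  have huIcc : Set.uIcc (0:ℝ) r = Set.Icc 0 r := Set.uIcc_of_le hr0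
  have hαr : IntegrableOn α (Set.Icc 0 r) := hα_int.mono_set hsub
  have hβr : IntegrableOn β (Set.Icc 0 r) := hβ_int.mono_set hsub
  have hαi : IntervalIntegrable α volume 0 r := by
    rw [intervalIntegrable_iff_integrableOn_Ioc_of_le hr0]
    exact hαr.mono_set Set.Ioc_subset_Icc_self
  have hβi : IntervalIntegrable β volume 0 r := by
    rw [intervalIntegrable_iff_integrableOn_Ioc_of_le hr0]
    exact hβr.mono_set Set.Ioc_subset_Icc_self
  have hexp_cont : Continuous fun s : ℝ => Real.exp (c * (r - s)) := by fun_prop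
  have hexpα : IntervalIntegrable (fun s => Real.exp (c * (r - s)) * α s) volume 0 r :=
    hαi.continuousOn_mul hexp_cont.continuousOn
  have hexpβ : IntervalIntegrable (fun s => Real.exp (c * (r - s)) * β s) volume 0 r :=
    hβi.continuousOn_mul hexp_cont.continuousOn
  have hA_cont : ContinuousOn (fun t => ∫ s in (0:ℝ)..t, α s) (Set.Icc 0 r) := by
    rw [← huIcc] at hαr ⊢
    exact intervalIntegral.continuousOn_primitive_interval hαr
  have hexpA : IntervalIntegrable (fun t => Real.exp (c * (r - t)) * (∫ s in (0:ℝ)..t, α s))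
      volume 0 r := by
    apply ContinuousOn.intervalIntegrable
    rw [huIcc]
    exact hexp_cont.continuousOn.mul hA_cont
  have hem1 : IntervalIntegrable (fun s => (Real.exp (c * (r - s)) - 1) * α s) volume 0 r :=
    hαi.continuousOn_mul (hexp_cont.sub continuous_const).continuousOn
  -- step 1: split the exponential-weighted integral of α
  have h1 : ∫ s in (0:ℝ)..r, Real.exp (c * (r - s)) * α s
      = (∫ s in (0:ℝ)..r, α s) + ∫ s in (0:ℝ)..r, (Real.exp (c * (r - s)) - 1) * α s := by
    rw [← intervalIntegral.integral_add hαi hem1]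
    apply intervalIntegral.integral_congr
    intro s _
    ring
  -- step 2: Fubini identity
  have h2 := fubini_aux c r hc hr0 hαr
  have h2' : ∫ t in (0:ℝ)..r, (c * Real.exp (c * (r - t))) * (∫ s in (0:ℝ)..t, α s)
      = c * ∫ t in (0:ℝ)..r, Real.exp (c * (r - t)) * (∫ s in (0:ℝ)..t, α s) := by
    rw [← intervalIntegral.integral_const_mul]
    apply intervalIntegral.integral_congr
    intro t _
    ring
  -- step 3: comparison
  have hcAβi : IntervalIntegrable
      (fun s => Real.exp (c * (r - s)) * (c * (∫ u in (0:ℝ)..s, α u) + β s)) volume 0 r := by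
    have : (fun s => Real.exp (c * (r - s)) * (c * (∫ u in (0:ℝ)..s, α u) + β s))
        = fun s => c * (Real.exp (c * (r - s)) * (∫ u in (0:ℝ)..s, α u))
          + Real.exp (c * (r - s)) * β s := by
      funext s; ring
    rw [this]
    exact (hexpA.const_mul c).add hexpβ
  have h3 : ∫ s in (0:ℝ)..r, Real.exp (c * (r - s)) * α s
      ≤ ∫ s in (0:ℝ)..r, Real.exp (c * (r - s)) * (c * (∫ u in (0:ℝ)..s, α u) + β s) := by
    apply intervalIntegral.integral_mono_on hr0 hexpα hcAβi
    intro s hs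
    exact mul_le_mul_of_nonneg_left (hα s (hsub hs)) (Real.exp_pos _).le
  have h4 : ∫ s in (0:ℝ)..r, Real.exp (c * (r - s)) * (c * (∫ u in (0:ℝ)..s, α u) + β s)
      = c * (∫ t in (0:ℝ)..r, Real.exp (c * (r - t)) * (∫ s in (0:ℝ)..t, α s))
        + ∫ s in (0:ℝ)..r, Real.exp (c * (r - s)) * β s := by
    rw [← intervalIntegral.integral_const_mul, ← intervalIntegral.integral_add
      (hexpA.const_mul c) hexpβ]
    apply intervalIntegral.integral_congr
    intro s _
    ring
  have key : (∫ s in (0:ℝ)..r, α s) ≤ ∫ s in (0:ℝ)..r, Real.exp (c * (r - s)) * β s := by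
    rw [h2, h2'] at h1
    linarith [h3.trans_eq h4, h1]
  calc α r ≤ c * (∫ s in (0:ℝ)..r, α s) + β r := hα r ⟨hr0, hrT⟩
    _ ≤ c * (∫ s in (0:ℝ)..r, Real.exp (c * (r - s)) * β s) + β r := by
        have := mul_le_mul_of_nonneg_left key hc
        linarith
end

section
/- Let a(r) be the piecewise constant function equal to −b on [0,ε], conj(ξ)·b on [ε,2ε], 0 on [2ε,∞), with b > 0 and |ξ| = 1. Let q, q* solve q' = −conj(a)q*, (q*)' = −a q with q(0)=0, q*(0)=1. Then q(ε) = sinh(bε), q*(ε) = cosh(bε), q(2ε) = (1/2)(1−ξ)sinh(2bε), and q*(2ε) = 1 + (1−conj(ξ))·sinh²(bε). -/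
open Complex

private lemma real_const_of_deriv_zero {f : ℝ → ℝ} {a b : ℝ} (hab : a < b)
    (hc : ContinuousOn f (Set.Icc a b))
    (hd : ∀ x ∈ Set.Ioo a b, HasDerivAt f 0 x) : f b = f a := by
  obtain ⟨c, _, h⟩ := exists_hasDerivAt_eq_slope f (fun _ => 0) hab hc hd
  have hba : b - a ≠ 0 := sub_ne_zero.2 hab.ne'
  field_simp at h
  linarith [h]

private lemma cx_const_of_deriv_zero {f : ℝ → ℂ} {a b : ℝ} (hab : a < b)
    (hc : ContinuousOn f (Set.Icc a b))
    (hd : ∀ x ∈ Set.Ioo a b, HasDerivAt f 0 x) : f b = f a := by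
  have hre : (f b).re = (f a).re := by
    apply real_const_of_deriv_zero hab (Complex.continuous_re.comp_continuousOn hc)
    intro x hx
    simpa [Function.comp_def] using (Complex.reCLM.hasFDerivAt.comp_hasDerivAt x (hd x hx))
  have him : (f b).im = (f a).im := by
    apply real_const_of_deriv_zero hab (Complex.continuous_im.comp_continuousOn hc)
    intro x hx
    simpa [Function.comp_def] using (Complex.imCLM.hasFDerivAt.comp_hasDerivAt x (hd x hx))
  exact Complex.ext hre him

private lemma hasDerivAt_cexp_real (c : ℂ) (r : ℝ) :
    HasDerivAt (fun x : ℝ => Complex.exp (c * x)) (c * Complex.exp (c * r)) r := by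
  have h1 : HasDerivAt (fun x : ℝ => (x : ℂ)) 1 r := by
    simpa using (hasDerivAt_id r).ofReal_comp
  have h2 : HasDerivAt (fun x : ℝ => c * (x : ℂ)) c r := by
    simpa using h1.const_mul c
  have h3 := (Complex.hasDerivAt_exp (c * r)).comp r h2
  simpa [mul_comm, Function.comp_def] using h3

/-- Explicit values at `ε` and `2ε` of the solution of `q' = -conj(a) q*`,
`(q*)' = -a q` for the piecewise-constant coefficient `a` equal to `-b` on
`[0,ε]`, `conj(ξ) b` on `[ε,2ε]` and `0` afterwards. -/
theorem q_system_piecewise_constant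
    (b ε : ℝ) (hb : 0 < b) (hε : 0 < ε)
    (ξ : ℂ) (hξ : ‖ξ‖ = 1)
    (A : ℝ → ℂ)
    (hA : ∀ r : ℝ, A r = if r ≤ ε then (-b : ℂ)
      else if r ≤ 2 * ε then (starRingEnd ℂ) ξ * (b : ℂ) else 0)
    (q qs : ℝ → ℂ)
    (hqc : Continuous q) (hqsc : Continuous qs)
    (hq : ∀ r : ℝ, 0 < r → r ≠ ε → r ≠ 2 * ε →
      HasDerivAt q (-(starRingEnd ℂ) (A r) * qs r) r)
    (hqs : ∀ r : ℝ, 0 < r → r ≠ ε → r ≠ 2 * ε →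
      HasDerivAt qs (-(A r) * q r) r)
    (hq0 : q 0 = 0) (hqs0 : qs 0 = 1) :
    q ε = (Real.sinh (b * ε) : ℝ) ∧
    qs ε = (Real.cosh (b * ε) : ℝ) ∧
    q (2 * ε) = (1 / 2 : ℂ) * (1 - ξ) * (Real.sinh (2 * b * ε) : ℝ) ∧
    qs (2 * ε) = 1 + (1 - (starRingEnd ℂ) ξ) * ((Real.sinh (b * ε) : ℝ) : ℂ) ^ 2 := by
  have hε2 : ε < 2 * ε := by linarith
  set E : ℂ := Complex.exp ((b : ℂ) * (ε : ℂ)) with hEdef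
  set E' : ℂ := Complex.exp (-(b : ℂ) * (ε : ℂ)) with hE'def
  have hEE' : E * E' = 1 := by
    rw [hEdef, hE'def, ← Complex.exp_add]
    rw [show (b : ℂ) * ε + -(b : ℂ) * ε = 0 by ring, Complex.exp_zero]
  have hE : E ≠ 0 := Complex.exp_ne_zero _
  have hE' : E' ≠ 0 := Complex.exp_ne_zero _
  have hξ1 : ξ * (starRingEnd ℂ) ξ = 1 := by
    have h1 : Complex.normSq ξ = 1 := by
      rw [Complex.normSq_eq_norm_sq, hξ]; norm_num
    rw [Complex.mul_conj, h1]; norm_num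
  -- derivatives on (0, ε)
  have hq1 : ∀ x ∈ Set.Ioo (0:ℝ) ε, HasDerivAt q ((b : ℂ) * qs x) x := by
    intro x hx
    have h := hq x hx.1 (ne_of_lt hx.2) (ne_of_lt (lt_trans hx.2 hε2))
    rw [hA x, if_pos hx.2.le] at h
    simpa using h
  have hqs1 : ∀ x ∈ Set.Ioo (0:ℝ) ε, HasDerivAt qs ((b : ℂ) * q x) x := by
    intro x hx
    have h := hqs x hx.1 (ne_of_lt hx.2) (ne_of_lt (lt_trans hx.2 hε2))
    rw [hA x, if_pos hx.2.le] at h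
    simpa using h
  -- derivatives on (ε, 2ε)
  have hq2 : ∀ x ∈ Set.Ioo ε (2*ε), HasDerivAt q (-(ξ * (b:ℂ)) * qs x) x := by
    intro x hx
    have h := hq x (lt_trans hε hx.1) (ne_of_gt hx.1) (ne_of_lt hx.2)
    rw [hA x, if_neg (not_le.2 hx.1), if_pos hx.2.le] at h
    simpa [map_mul, Complex.conj_conj, Complex.conj_ofReal] using h
  have hqs2 : ∀ x ∈ Set.Ioo ε (2*ε),
      HasDerivAt qs (-((starRingEnd ℂ) ξ * (b:ℂ)) * q x) x := by
    intro x hx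
    have h := hqs x (lt_trans hε hx.1) (ne_of_gt hx.1) (ne_of_lt hx.2)
    rw [hA x, if_neg (not_le.2 hx.1), if_pos hx.2.le] at h
    exact h
  -- constancy on [0, ε]
  have key1 : (q ε + qs ε) * E' = 1 := by
    have h := cx_const_of_deriv_zero (f := fun r : ℝ => (q r + qs r) * Complex.exp (-(b:ℂ) * r))
      hε
      (((hqc.add hqsc).mul (Complex.continuous_exp.comp
        (continuous_const.mul Complex.continuous_ofReal))).continuousOn)
      ?_
    · simpa [hq0, hqs0, ← neg_mul] using h
    · intro x hx
      have hd := (((hq1 x hx).add (hqs1 x hx)).mul (hasDerivAt_cexp_real (-(b:ℂ)) x))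
      refine hd.congr_deriv ?_
      simp only [Pi.add_apply, Pi.sub_apply]
      ring
  have key2 : (q ε - qs ε) * E = -1 := by
    have h := cx_const_of_deriv_zero (f := fun r : ℝ => (q r - qs r) * Complex.exp ((b:ℂ) * r))
      hε
      (((hqc.sub hqsc).mul (Complex.continuous_exp.comp
        (continuous_const.mul Complex.continuous_ofReal))).continuousOn)
      ?_
    · simpa [hq0, hqs0] using h
    · intro x hx
      have hd := (((hq1 x hx).sub (hqs1 x hx)).mul (hasDerivAt_cexp_real ((b:ℂ)) x))
      refine hd.congr_deriv ?_
      simp only [Pi.add_apply, Pi.sub_apply]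
      ring
  have hsE : q ε = (E - E') / 2 := by
    linear_combination (E/2) * key1 + (E'/2) * key2 - q ε * hEE'
  have hcE : qs ε = (E + E') / 2 := by
    linear_combination (E/2) * key1 - (E'/2) * key2 - qs ε * hEE'
  -- constancy on [ε, 2ε]
  have key3 : (q (2*ε) + ξ * qs (2*ε)) * Complex.exp ((b:ℂ) * ((2*ε : ℝ) : ℂ))
      = (q ε + ξ * qs ε) * E := by
    exact cx_const_of_deriv_zero
      (f := fun r : ℝ => (q r + ξ * qs r) * Complex.exp ((b:ℂ) * r)) hε2
      (((hqc.add (continuous_const.mul hqsc)).mul (Complex.continuous_exp.comp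
        (continuous_const.mul Complex.continuous_ofReal))).continuousOn)
      (by
        intro x hx
        have hd := (((hq2 x hx).add ((hqs2 x hx).const_mul ξ)).mul
          (hasDerivAt_cexp_real ((b:ℂ)) x))
        refine hd.congr_deriv ?_
        simp only [Pi.add_apply, Pi.sub_apply]
        linear_combination (-((b:ℂ) * q x * Complex.exp ((b:ℂ) * x))) * hξ1)
  have key4 : (q (2*ε) - ξ * qs (2*ε)) * Complex.exp (-(b:ℂ) * ((2*ε : ℝ) : ℂ))
      = (q ε - ξ * qs ε) * E' := by
    exact cx_const_of_deriv_zero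
      (f := fun r : ℝ => (q r - ξ * qs r) * Complex.exp (-(b:ℂ) * r)) hε2
      (((hqc.sub (continuous_const.mul hqsc)).mul (Complex.continuous_exp.comp
        (continuous_const.mul Complex.continuous_ofReal))).continuousOn)
      (by
        intro x hx
        have hd := (((hq2 x hx).sub ((hqs2 x hx).const_mul ξ)).mul
          (hasDerivAt_cexp_real (-(b:ℂ)) x))
        refine hd.congr_deriv ?_
        simp only [Pi.add_apply, Pi.sub_apply]
        linear_combination ((b:ℂ) * q x * Complex.exp (-(b:ℂ) * x)) * hξ1)
  have hexp2 : Complex.exp ((b:ℂ) * ((2*ε : ℝ) : ℂ)) = E * E := by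
    rw [show (b:ℂ) * ((2*ε : ℝ) : ℂ) = (b:ℂ) * ε + (b:ℂ) * ε by push_cast; ring,
      Complex.exp_add]
  have hexp2' : Complex.exp (-(b:ℂ) * ((2*ε : ℝ) : ℂ)) = E' * E' := by
    rw [show -(b:ℂ) * ((2*ε : ℝ) : ℂ) = -(b:ℂ) * ε + -(b:ℂ) * ε by push_cast; ring,
      Complex.exp_add]
  rw [hexp2, hsE, hcE] at key3
  rw [hexp2', hsE, hcE] at key4
  have Ch1 : (q (2*ε) + ξ * qs (2*ε)) * E = (E - E')/2 + ξ * ((E + E')/2) :=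
    mul_right_cancel₀ hE (by linear_combination key3)
  have Ch2 : q (2*ε) + ξ * qs (2*ε) = ((E - E')/2 + ξ * ((E + E')/2)) * E' := by
    linear_combination E' * Ch1 - (q (2*ε) + ξ * qs (2*ε)) * hEE'
  have Dh1 : (q (2*ε) - ξ * qs (2*ε)) * E' = (E - E')/2 - ξ * ((E + E')/2) :=
    mul_right_cancel₀ hE' (by linear_combination key4)
  have Dh2 : q (2*ε) - ξ * qs (2*ε) = ((E - E')/2 - ξ * ((E + E')/2)) * E := by
    linear_combination E * Dh1 - (q (2*ε) - ξ * qs (2*ε)) * hEE'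
  -- conversions of sinh/cosh to exponentials
  have hs1 : ((Real.sinh (b * ε) : ℝ) : ℂ) = (E - E') / 2 := by
    rw [Real.sinh_eq]
    push_cast
    rw [show -((b:ℂ) * ε) = -(b:ℂ) * ε by ring]
  have hc1 : ((Real.cosh (b * ε) : ℝ) : ℂ) = (E + E') / 2 := by
    rw [Real.cosh_eq]
    push_cast
    rw [show -((b:ℂ) * ε) = -(b:ℂ) * ε by ring]
  have hs2 : ((Real.sinh (2 * b * ε) : ℝ) : ℂ) = (E * E - E' * E') / 2 := by
    rw [Real.sinh_eq]
    push_cast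
    rw [show (2:ℂ) * b * ε = (b:ℂ) * ε + (b:ℂ) * ε by ring]
    rw [show -((b:ℂ) * ε + (b:ℂ) * ε) = -(b:ℂ) * ε + -(b:ℂ) * ε by ring]
    rw [Complex.exp_add, Complex.exp_add]
  refine ⟨by rw [hsE, hs1], by rw [hcE, hc1], ?_, ?_⟩
  · rw [hs2]
    linear_combination (1/2 : ℂ) * Ch2 + (1/2 : ℂ) * Dh2
  · rw [hs1]
    linear_combination ((starRingEnd ℂ) ξ / 2) * Ch2 - ((starRingEnd ℂ) ξ / 2) * Dh2
      + ((E + E')^2/4 - qs (2*ε)) * hξ1 + hEE'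
end

section
/- For the Krein system with continuous coefficient a and Im λ > 0, if liminf_{r→∞} |p*(r,λ)| < ∞ for some λ ∈ ℂ⁺, then ∫₀^∞ |p(s,λ)|² ds < ∞ for that λ; conversely, if ∫₀^∞ |p(s,λ)|² ds < ∞ then liminf_{r→∞} |p*(r,λ)| < ∞. -/
open Complex MeasureTheory Filter

/-- For the Krein system with `Im λ > 0`: `liminf |p*(r,λ)| < ∞` (i.e. `|p*|`
is frequently bounded) iff `∫₀^∞ |p(s,λ)|² ds < ∞` (i.e. the partial integrals
are bounded). -/
theorem krein_liminf_iff_square_integrable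
    (a p q : ℝ → ℂ) (l : ℂ)
    (ha : Continuous a)
    (hl : 0 < l.im)
    (hp : ∀ r, HasDerivAt p (Complex.I * l * p r - (starRingEnd ℂ) (a r) * q r) r)
    (hq : ∀ r, HasDerivAt q (-(a r) * p r) r)
    (hp0 : p 0 = 1) (hq0 : q 0 = 1) :
    (∃ M : ℝ, ∃ᶠ r in atTop, ‖q r‖ ≤ M) ↔
      (∃ C : ℝ, ∀ r : ℝ, 0 ≤ r → ∫ s in (0:ℝ)..r, ‖p s‖ ^ 2 ≤ C) := by
  have hpc : Continuous p := by
    rw [continuous_iff_continuousAt]; exact fun r => (hp r).continuousAt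
  have hqc : Continuous q := by
    rw [continuous_iff_continuousAt]; exact fun r => (hq r).continuousAt
  have hpn : Continuous fun s => ‖p s‖ ^ 2 := (hpc.norm.pow 2)
  set Qi : ℝ → ℝ := fun r => ∫ s in (0:ℝ)..r, ‖p s‖ ^ 2 with hQi
  have hint : ∀ r, HasDerivAt Qi (‖p r‖ ^ 2) r := fun r =>
    (hpn.integral_hasStrictDerivAt 0 r).hasDerivAt
  -- the fundamental identity
  have key : ∀ r, ‖q r‖ ^ 2 - ‖p r‖ ^ 2 = 2 * l.im * Qi r := by
    have enq : ∀ z : ℂ, ‖z‖ ^ 2 = z.re * z.re + z.im * z.im := by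
      intro z; rw [Complex.sq_norm, Complex.normSq_apply]
    set F : ℝ → ℝ := fun r => ‖q r‖ ^ 2 - ‖p r‖ ^ 2 - 2 * l.im * Qi r with hF
    have hFd : ∀ r, HasDerivAt F 0 r := by
      intro r
      set p' : ℂ := Complex.I * l * p r - (starRingEnd ℂ) (a r) * q r with hp'
      set q' : ℂ := -(a r) * p r with hq'
      have hqre : HasDerivAt (fun r => (q r).re) q'.re r :=
        Complex.reCLM.hasFDerivAt.comp_hasDerivAt r (hq r)
      have hqim : HasDerivAt (fun r => (q r).im) q'.im r :=
        Complex.imCLM.hasFDerivAt.comp_hasDerivAt r (hq r)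
      have hpre : HasDerivAt (fun r => (p r).re) p'.re r :=
        Complex.reCLM.hasFDerivAt.comp_hasDerivAt r (hp r)
      have hpim : HasDerivAt (fun r => (p r).im) p'.im r :=
        Complex.imCLM.hasFDerivAt.comp_hasDerivAt r (hp r)
      have hqn : HasDerivAt (fun r => ‖q r‖ ^ 2)
          (q'.re * (q r).re + (q r).re * q'.re + (q'.im * (q r).im + (q r).im * q'.im)) r := by
        have := (hqre.mul hqre).add (hqim.mul hqim)
        simp only [enq]
        exact this
      have hpnn : HasDerivAt (fun r => ‖p r‖ ^ 2)
          (p'.re * (p r).re + (p r).re * p'.re + (p'.im * (p r).im + (p r).im * p'.im)) r := by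
        have := (hpre.mul hpre).add (hpim.mul hpim)
        simp only [enq]
        exact this
      have hFd0 := (hqn.sub hpnn).sub ((hint r).const_mul (2 * l.im))
      refine hFd0.congr_deriv ?_
      rw [hq', hp', enq (p r)]
      simp only [Complex.mul_re, Complex.mul_im, Complex.sub_re, Complex.sub_im,
        Complex.neg_re, Complex.neg_im, Complex.I_re, Complex.I_im,
        Complex.conj_re, Complex.conj_im, RingHom.coe_coe]
      ring
    have hFc : ∀ r, F r = F 0 := fun r =>
      is_const_of_deriv_eq_zero (fun x => (hFd x).differentiableAt)
        (fun x => (hFd x).deriv) r 0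
    intro r
    have h1 := hFc r
    rw [hF] at h1
    simp only [hq0, hp0, norm_one, one_pow] at h1
    have h2 : Qi 0 = 0 := by simp [hQi]
    rw [h2] at h1
    linarith
  have hQnonneg : ∀ r, 0 ≤ r → 0 ≤ Qi r := fun r hr =>
    intervalIntegral.integral_nonneg hr (fun s _ => by positivity)
  have hQmono : ∀ r r', 0 ≤ r → r ≤ r' → Qi r ≤ Qi r' := by
    intro r r' _ hrr'
    have hadd : Qi r + ∫ s in r..r', ‖p s‖ ^ 2 = Qi r' :=
      intervalIntegral.integral_add_adjacent_intervals
        (hpn.intervalIntegrable 0 r) (hpn.intervalIntegrable r r')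
    have h2 : (0:ℝ) ≤ ∫ s in r..r', ‖p s‖ ^ 2 :=
      intervalIntegral.integral_nonneg hrr' (fun s _ => by positivity)
    linarith
  constructor
  · rintro ⟨M, hM⟩
    refine ⟨M ^ 2 / (2 * l.im), fun r hr => ?_⟩
    obtain ⟨r', hr'M, hr'⟩ := (hM.and_eventually (eventually_ge_atTop r)).exists
    have hMnn : 0 ≤ M := le_trans (norm_nonneg _) hr'M
    have h1 : 2 * l.im * Qi r' ≤ M ^ 2 := by
      have := key r'
      have h2 : ‖q r'‖ ^ 2 ≤ M ^ 2 := by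
        apply pow_le_pow_left₀ (norm_nonneg _) hr'M
      nlinarith [sq_nonneg ‖p r'‖]
    have h3 : Qi r ≤ Qi r' := hQmono r r' hr hr'
    rw [le_div_iff₀ (by linarith)]
    show Qi r * (2 * l.im) ≤ M ^ 2
    nlinarith
  · rintro ⟨C, hC⟩
    have hC0 : 0 ≤ C := le_trans (hQnonneg 0 le_rfl) (hC 0 le_rfl)
    refine ⟨Real.sqrt (1 + 2 * l.im * C), ?_⟩
    -- first: frequently ‖p r‖ ≤ 1
    have hfreq : ∃ᶠ r in atTop, ‖p r‖ ≤ 1 := by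
      by_contra hcon
      rw [Filter.not_frequently] at hcon
      obtain ⟨R₀, hR⟩ := (hcon.and (eventually_ge_atTop (0:ℝ))).exists_forall_of_atTop
      set R := max R₀ 0 with hRdef
      have hR0 : 0 ≤ R := le_max_right _ _
      have hgrow : ∀ r, R ≤ r → Qi R + (r - R) ≤ Qi r := by
        intro r hr
        have hadd : Qi R + ∫ s in R..r, ‖p s‖ ^ 2 = Qi r :=
          intervalIntegral.integral_add_adjacent_intervals
            (hpn.intervalIntegrable 0 R) (hpn.intervalIntegrable R r)
        have hone : ∫ s in R..r, (1:ℝ) ≤ ∫ s in R..r, ‖p s‖ ^ 2 := by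
          apply intervalIntegral.integral_mono_on hr
            (intervalIntegrable_const) (hpn.intervalIntegrable R r)
          intro s hs
          have hs' : R₀ ≤ s := le_trans (le_trans (le_max_left _ _) hs.1) le_rfl
          have := (hR s hs').1
          push_neg at this
          nlinarith [norm_nonneg (p s)]
        have : ∫ s in R..r, (1:ℝ) = r - R := by simp
        linarith
      have hbig := hgrow (R + C + 1) (by linarith)
      have := hC (R + C + 1) (by linarith)
      have hQR := hQnonneg R hR0
      linarith
    refine ((hfreq.and_eventually (eventually_ge_atTop (0:ℝ)))).mono ?_
    rintro r ⟨hp1, hr0⟩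
    have hkey := key r
    have hQle : Qi r ≤ C := hC r hr0
    have hq2 : ‖q r‖ ^ 2 ≤ 1 + 2 * l.im * C := by
      have h1 : ‖p r‖ ^ 2 ≤ 1 := by nlinarith [norm_nonneg (p r)]
      nlinarith
    exact (Real.le_sqrt (norm_nonneg _) (by nlinarith)).2 hq2
end
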